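/- arXiv:1601.06855 — 2 statements merged into one kernel-verified Lean document; each statement's English description precedes it below -/
import Mathlib

section
/- Let P₁ and P₂ be orthogonal projections on finite-dimensional Hilbert spaces H₁ and H₂ respectively. Suppose X₁, Y₁ are Hermitian operators on H₁ with P₁(X₁ - Y₁)P₁ ≤ 0 and P₁ Y₁ P₁ ≥ 0, and X₂, Y₂ are Hermitian operators on H₂ with P₂(X₂ - Y₂)P₂ ≤ 0 and P₂ X₂ P₂ ≥ 0. Then (P₁ ⊗ P₂)(X₁ ⊗ X₂ - Y₁ ⊗ Y₂)(P₁ ⊗ P₂) ≤ 0. -/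
open Matrix Kronecker ComplexOrder

lemma kron_conjTranspose {l m n p : Type*} (A : Matrix l m ℂ) (B : Matrix n p ℂ) :
    (A ⊗ₖ B)ᴴ = Aᴴ ⊗ₖ Bᴴ := by
  ext ⟨i, j⟩ ⟨k, l⟩
  simp [Matrix.kroneckerMap_apply, Matrix.conjTranspose_apply, mul_comm]

lemma kron_psd {n₁ n₂ : Type*} [Fintype n₁] [Fintype n₂] [DecidableEq n₁] [DecidableEq n₂]
    {A : Matrix n₁ n₁ ℂ} {B : Matrix n₂ n₂ ℂ}
    (hA : A.PosSemidef) (hB : B.PosSemidef) : (A ⊗ₖ B).PosSemidef := by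
  obtain ⟨A', rfl⟩ : ∃ C : Matrix n₁ n₁ ℂ, A = Cᴴ * C := by
    open scoped MatrixOrder Matrix.Norms.L2Operator in
    exact CStarAlgebra.nonneg_iff_eq_star_mul_self.mp hA.nonneg
  obtain ⟨B', rfl⟩ : ∃ C : Matrix n₂ n₂ ℂ, B = Cᴴ * C := by
    open scoped MatrixOrder Matrix.Norms.L2Operator in
    exact CStarAlgebra.nonneg_iff_eq_star_mul_self.mp hB.nonneg
  rw [Matrix.mul_kronecker_mul, ← kron_conjTranspose]
  exact Matrix.posSemidef_conjTranspose_mul_self _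

lemma neg_kron {l m n p : Type*} (A : Matrix l m ℂ) (B : Matrix n p ℂ) :
    (-A) ⊗ₖ B = -(A ⊗ₖ B) := by
  ext ⟨i, j⟩ ⟨k, l⟩; simp [Matrix.kroneckerMap_apply]

lemma kron_neg {l m n p : Type*} (A : Matrix l m ℂ) (B : Matrix n p ℂ) :
    A ⊗ₖ (-B) = -(A ⊗ₖ B) := by
  ext ⟨i, j⟩ ⟨k, l⟩; simp [Matrix.kroneckerMap_apply]

/-- If `P₁, P₂` are orthogonal projections, `X₁, Y₁` Hermitian with
`P₁ (X₁ - Y₁) P₁ ≤ 0` and `P₁ Y₁ P₁ ≥ 0`, and `X₂, Y₂` Hermitian with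
`P₂ (X₂ - Y₂) P₂ ≤ 0` and `P₂ X₂ P₂ ≥ 0`, then
`(P₁ ⊗ P₂) (X₁ ⊗ X₂ - Y₁ ⊗ Y₂) (P₁ ⊗ P₂) ≤ 0` in the Loewner order. -/
theorem kron_sandwich_nonpos {n₁ n₂ : Type*} [Fintype n₁] [Fintype n₂]
    [DecidableEq n₁] [DecidableEq n₂]
    (P₁ X₁ Y₁ : Matrix n₁ n₁ ℂ) (P₂ X₂ Y₂ : Matrix n₂ n₂ ℂ)
    (hP₁herm : P₁.IsHermitian) (hP₁proj : P₁ * P₁ = P₁)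
    (hP₂herm : P₂.IsHermitian) (hP₂proj : P₂ * P₂ = P₂)
    (hX₁ : X₁.IsHermitian) (hY₁ : Y₁.IsHermitian)
    (hX₂ : X₂.IsHermitian) (hY₂ : Y₂.IsHermitian)
    (h₁ : (-(P₁ * (X₁ - Y₁) * P₁)).PosSemidef)
    (h₁' : (P₁ * Y₁ * P₁).PosSemidef)
    (h₂ : (-(P₂ * (X₂ - Y₂) * P₂)).PosSemidef)
    (h₂' : (P₂ * X₂ * P₂).PosSemidef) :
    (-((P₁ ⊗ₖ P₂) * (X₁ ⊗ₖ X₂ - Y₁ ⊗ₖ Y₂) * (P₁ ⊗ₖ P₂))).PosSemidef := by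
  have key : -((P₁ ⊗ₖ P₂) * (X₁ ⊗ₖ X₂ - Y₁ ⊗ₖ Y₂) * (P₁ ⊗ₖ P₂)) =
      (-(P₁ * (X₁ - Y₁) * P₁)) ⊗ₖ (P₂ * X₂ * P₂) +
      (P₁ * Y₁ * P₁) ⊗ₖ (-(P₂ * (X₂ - Y₂) * P₂)) := by
    have hsplit : X₁ ⊗ₖ X₂ - Y₁ ⊗ₖ Y₂ =
        (X₁ - Y₁) ⊗ₖ X₂ + Y₁ ⊗ₖ (X₂ - Y₂) := by
      have e1 : (X₁ - Y₁) ⊗ₖ X₂ = X₁ ⊗ₖ X₂ - Y₁ ⊗ₖ X₂ := by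
        rw [sub_eq_add_neg, Matrix.add_kronecker, neg_kron, ← sub_eq_add_neg]
      have e2 : Y₁ ⊗ₖ (X₂ - Y₂) = Y₁ ⊗ₖ X₂ - Y₁ ⊗ₖ Y₂ := by
        rw [sub_eq_add_neg, Matrix.kronecker_add, kron_neg, ← sub_eq_add_neg]
      rw [e1, e2]; abel
    rw [hsplit, mul_add, add_mul, neg_add, neg_kron, kron_neg, Matrix.mul_kronecker_mul,
      Matrix.mul_kronecker_mul, Matrix.mul_kronecker_mul, Matrix.mul_kronecker_mul]
  rw [key]
  exact (kron_psd h₁ h₂').add (kron_psd h₁' h₂)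
end

section
/- If (S, U) is feasible for projection P (i.e., U ≥ 0, Tr_A U = I_B, P(S ⊗ I_B − U)P ≤ 0) and moreover P(S ⊗ I_B)P ≥ 0, then for every n ≥ 1 the pair (S^{⊗n}, U^{⊗n}) is feasible for P^{⊗n} and also satisfies P^{⊗n}(S^{⊗n} ⊗ I_B^{⊗n})P^{⊗n} ≥ 0. -/
open Matrix Kronecker ComplexOrder

/-- Partial trace over the first (`A`) factor. -/
noncomputable def ptraceA {A B : Type*} [Fintype A] (M : Matrix (A × B) (A × B) ℂ) :
    Matrix B B ℂ :=
  Matrix.of fun b b' => ∑ a : A, M (a, b) (a, b')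

/-- The `n`-fold tensor (Kronecker) power of a matrix. -/
noncomputable def tensorPow {I : Type*} (M : Matrix I I ℂ) (n : ℕ) :
    Matrix (Fin n → I) (Fin n → I) ℂ :=
  Matrix.of fun f g => ∏ k : Fin n, M (f k) (g k)

/-- Feasibility for the dual SDP of the simulation cost. -/
def Feasible {A B : Type*} [Fintype A] [Fintype B] [DecidableEq B]
    (P : Matrix (A × B) (A × B) ℂ) (S : Matrix A A ℂ) (U : Matrix (A × B) (A × B) ℂ) :
    Prop :=
  S.IsHermitian ∧ U.PosSemidef ∧ ptraceA U = 1 ∧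
    (-(P * (S ⊗ₖ (1 : Matrix B B ℂ) - U) * P)).PosSemidef

/-- The natural identification `(A × B)^{⊗n} ≃ A^{⊗n} × B^{⊗n}`. -/
def powEquiv (A B : Type*) (n : ℕ) : (Fin n → A × B) ≃ (Fin n → A) × (Fin n → B) :=
  Equiv.arrowProdEquivProdArrow (Fin n) (fun _ => A) (fun _ => B)

section Aux

variable {I : Type*} [Fintype I] [DecidableEq I]

lemma psd_eq_conjTranspose_mul_self {J : Type*} [Fintype J] [DecidableEq J]
    {M : Matrix J J ℂ} (hM : M.PosSemidef) : ∃ B : Matrix J J ℂ, M = Bᴴ * B := by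
  open scoped MatrixOrder Matrix.Norms.L2Operator in
  exact CStarAlgebra.nonneg_iff_eq_star_mul_self.mp hM.nonneg

lemma tensorPow_conjTranspose (M : Matrix I I ℂ) (n : ℕ) :
    (tensorPow M n)ᴴ = tensorPow Mᴴ n := by
  ext f g
  simp [tensorPow, conjTranspose_apply, star_prod]

lemma tensorPow_mul (M N : Matrix I I ℂ) (n : ℕ) :
    tensorPow (M * N) n = tensorPow M n * tensorPow N n := by
  ext f g
  simp only [tensorPow, Matrix.of_apply, Matrix.mul_apply]
  rw [Finset.prod_univ_sum]
  simp [Fintype.piFinset_univ, Finset.prod_mul_distrib]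

lemma tensorPow_one (n : ℕ) : tensorPow (1 : Matrix I I ℂ) n = 1 := by
  ext f g
  simp [tensorPow, Matrix.one_apply, Finset.prod_boole, funext_iff]

lemma tensorPow_posSemidef {M : Matrix I I ℂ} (hM : M.PosSemidef) (n : ℕ) :
    (tensorPow M n).PosSemidef := by
  obtain ⟨B, rfl⟩ := psd_eq_conjTranspose_mul_self hM
  rw [tensorPow_mul, ← tensorPow_conjTranspose]
  exact Matrix.posSemidef_conjTranspose_mul_self _

lemma tensorPow_isHermitian {M : Matrix I I ℂ} (hM : M.IsHermitian) (n : ℕ) :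
    (tensorPow M n).IsHermitian := by
  unfold Matrix.IsHermitian
  rw [tensorPow_conjTranspose, hM.eq]

lemma kronecker_conjTranspose {J : Type*} (M : Matrix I I ℂ) (N : Matrix J J ℂ) :
    (M ⊗ₖ N)ᴴ = Mᴴ ⊗ₖ Nᴴ := by
  ext ⟨a, b⟩ ⟨c, d⟩
  simp [conjTranspose_apply, Matrix.kroneckerMap_apply]

lemma posSemidef_kronecker {J : Type*} [Fintype J] [DecidableEq J]
    {M : Matrix I I ℂ} {N : Matrix J J ℂ} (hM : M.PosSemidef) (hN : N.PosSemidef) :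
    (M ⊗ₖ N).PosSemidef := by
  obtain ⟨C, rfl⟩ := psd_eq_conjTranspose_mul_self hM
  obtain ⟨D, rfl⟩ := psd_eq_conjTranspose_mul_self hN
  rw [Matrix.mul_kronecker_mul, ← kronecker_conjTranspose]
  exact Matrix.posSemidef_conjTranspose_mul_self _

lemma tensorPow_succ (M : Matrix I I ℂ) (n : ℕ) :
    tensorPow M (n + 1) =
      Matrix.reindex (Fin.consEquiv fun _ => I) (Fin.consEquiv fun _ => I)
        (M ⊗ₖ tensorPow M n) := by
  ext f g
  simp [tensorPow, Matrix.reindex_apply, Matrix.submatrix_apply,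
    Matrix.kroneckerMap_apply, Fin.prod_univ_succ, Fin.tail]

lemma tensorPow_sub_posSemidef {X Y : Matrix I I ℂ} (hX : X.PosSemidef)
    (hYX : (Y - X).PosSemidef) (n : ℕ) :
    (tensorPow Y n - tensorPow X n).PosSemidef := by
  induction n with
  | zero =>
      have h : tensorPow Y 0 = tensorPow X 0 := by
        ext f g; simp [tensorPow]
      rw [h, sub_self]
      exact Matrix.PosSemidef.zero
  | succ n ih =>
      have hYn : (tensorPow Y n).PosSemidef := by
        have hY : Y.PosSemidef := by simpa using hYX.add hX
        exact tensorPow_posSemidef hY n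
      rw [tensorPow_succ, tensorPow_succ]
      have key : Y ⊗ₖ tensorPow Y n - X ⊗ₖ tensorPow X n =
          (Y - X) ⊗ₖ tensorPow Y n + X ⊗ₖ (tensorPow Y n - tensorPow X n) := by
        ext ⟨a, b⟩ ⟨c, d⟩
        simp [Matrix.kroneckerMap_apply, Matrix.sub_apply, Matrix.add_apply]
        ring
      have hsub : ∀ (M N : Matrix (I × (Fin n → I)) (I × (Fin n → I)) ℂ),
          Matrix.reindex (Fin.consEquiv fun _ => I) (Fin.consEquiv fun _ => I) M -
            Matrix.reindex (Fin.consEquiv fun _ => I) (Fin.consEquiv fun _ => I) N =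
          Matrix.reindex (Fin.consEquiv fun _ => I) (Fin.consEquiv fun _ => I) (M - N) := by
        intro M N; ext f g; simp
      rw [hsub, key, Matrix.reindex_apply]
      exact ((posSemidef_kronecker hYX hYn).add
        (posSemidef_kronecker hX ih)).submatrix _

end Aux

section Main

variable {A B : Type*} [Fintype A] [Fintype B] [DecidableEq A] [DecidableEq B]

lemma reindex_mul {I J : Type*} [Fintype I] [Fintype J] (e : I ≃ J)
    (M N : Matrix I I ℂ) :
    Matrix.reindex e e M * Matrix.reindex e e N = Matrix.reindex e e (M * N) := by
  simp [Matrix.reindex_apply, Matrix.submatrix_mul_equiv]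

lemma ptraceA_reindex_tensorPow (U : Matrix (A × B) (A × B) ℂ) (n : ℕ) :
    ptraceA (Matrix.reindex (powEquiv A B n) (powEquiv A B n) (tensorPow U n)) =
      tensorPow (ptraceA U) n := by
  ext b b'
  simp only [ptraceA, tensorPow, Matrix.of_apply, Matrix.reindex_apply,
    Matrix.submatrix_apply, powEquiv, Equiv.arrowProdEquivProdArrow,
    Equiv.coe_fn_symm_mk]
  rw [Finset.prod_univ_sum]
  simp [Fintype.piFinset_univ]

lemma reindex_tensorPow_kronecker (M : Matrix A A ℂ) (N : Matrix B B ℂ) (n : ℕ) :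
    Matrix.reindex (powEquiv A B n) (powEquiv A B n) (tensorPow (M ⊗ₖ N) n) =
      tensorPow M n ⊗ₖ tensorPow N n := by
  ext ⟨a, b⟩ ⟨a', b'⟩
  simp [tensorPow, Matrix.reindex_apply, Matrix.submatrix_apply, powEquiv,
    Equiv.arrowProdEquivProdArrow, Matrix.kroneckerMap_apply,
    Finset.prod_mul_distrib]

end Main

/-- If `(S, U)` is feasible for `P` and moreover `P (S ⊗ I_B) P ≥ 0`, then for
every `n ≥ 1` the pair `(S^{⊗n}, U^{⊗n})` is feasible for `P^{⊗n}` and also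
satisfies `P^{⊗n} (S^{⊗n} ⊗ I_B^{⊗n}) P^{⊗n} ≥ 0`. -/
theorem tensorPow_feasible {A B : Type*} [Fintype A] [Fintype B]
    [DecidableEq A] [DecidableEq B]
    (P U : Matrix (A × B) (A × B) ℂ) (S : Matrix A A ℂ)
    (hPherm : P.IsHermitian) (hPproj : P * P = P)
    (hfeas : Feasible P S U)
    (hpos : (P * (S ⊗ₖ (1 : Matrix B B ℂ)) * P).PosSemidef) :
    ∀ n : ℕ, 1 ≤ n →
      Feasible (Matrix.reindex (powEquiv A B n) (powEquiv A B n) (tensorPow P n))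
        (tensorPow S n)
        (Matrix.reindex (powEquiv A B n) (powEquiv A B n) (tensorPow U n)) ∧
      ((Matrix.reindex (powEquiv A B n) (powEquiv A B n) (tensorPow P n)) *
          (tensorPow S n ⊗ₖ (1 : Matrix (Fin n → B) (Fin n → B) ℂ)) *
          (Matrix.reindex (powEquiv A B n) (powEquiv A B n) (tensorPow P n))).PosSemidef := by
  obtain ⟨hS, hU, htr, hneg⟩ := hfeas
  intro n hn
  set e := powEquiv A B n with he
  -- rewrite the middle kron term
  have hone : (1 : Matrix (Fin n → B) (Fin n → B) ℂ) = tensorPow (1 : Matrix B B ℂ) n :=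
    (tensorPow_one n).symm
  have hmid : tensorPow S n ⊗ₖ (1 : Matrix (Fin n → B) (Fin n → B) ℂ) =
      Matrix.reindex e e (tensorPow (S ⊗ₖ (1 : Matrix B B ℂ)) n) := by
    rw [reindex_tensorPow_kronecker, hone]
  -- the sandwiched expression
  have hsandwich : Matrix.reindex e e (tensorPow P n) *
      (tensorPow S n ⊗ₖ (1 : Matrix (Fin n → B) (Fin n → B) ℂ)) *
      Matrix.reindex e e (tensorPow P n) =
      Matrix.reindex e e (tensorPow (P * (S ⊗ₖ (1 : Matrix B B ℂ)) * P) n) := by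
    rw [hmid, reindex_mul, reindex_mul, tensorPow_mul, tensorPow_mul]
  have hPUP : Matrix.reindex e e (tensorPow P n) *
      Matrix.reindex e e (tensorPow U n) * Matrix.reindex e e (tensorPow P n) =
      Matrix.reindex e e (tensorPow (P * U * P) n) := by
    rw [reindex_mul, reindex_mul, tensorPow_mul, tensorPow_mul]
  have hpos_n : (Matrix.reindex e e (tensorPow P n) *
      (tensorPow S n ⊗ₖ (1 : Matrix (Fin n → B) (Fin n → B) ℂ)) *
      Matrix.reindex e e (tensorPow P n)).PosSemidef := by
    rw [hsandwich, Matrix.reindex_apply]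
    exact (tensorPow_posSemidef hpos n).submatrix _
  refine ⟨⟨tensorPow_isHermitian hS n, ?_, ?_, ?_⟩, hpos_n⟩
  · rw [Matrix.reindex_apply]
    exact (tensorPow_posSemidef hU n).submatrix _
  · rw [ptraceA_reindex_tensorPow, htr, tensorPow_one]
  · -- negativity condition
    have hYX : (P * U * P - P * (S ⊗ₖ (1 : Matrix B B ℂ)) * P).PosSemidef := by
      have : P * U * P - P * (S ⊗ₖ (1 : Matrix B B ℂ)) * P =
          -(P * (S ⊗ₖ (1 : Matrix B B ℂ) - U) * P) := by
        rw [Matrix.mul_sub, Matrix.sub_mul]; abel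
      rw [this]; exact hneg
    have htel := tensorPow_sub_posSemidef hpos hYX n
    have hexpr : -(Matrix.reindex e e (tensorPow P n) *
        (tensorPow S n ⊗ₖ (1 : Matrix (Fin n → B) (Fin n → B) ℂ) -
          Matrix.reindex e e (tensorPow U n)) *
        Matrix.reindex e e (tensorPow P n)) =
        Matrix.reindex e e (tensorPow (P * U * P) n -
          tensorPow (P * (S ⊗ₖ (1 : Matrix B B ℂ)) * P) n) := by
      rw [Matrix.mul_sub, Matrix.sub_mul, neg_sub, hPUP, hsandwich]
      ext f g
      simp
    rw [hexpr, Matrix.reindex_apply]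
    exact htel.submatrix _
end
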